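/- Let l | k, n be a positive integer, d = gcd(n,k). If k / lcm(d, l) is even then { x ∈ GF(2^n) : T_l^k(x) = 0 } = GF(2^d); if k / lcm(d, l) is odd then { x ∈ GF(2^n) : T_l^k(x) = 0 } = { x + x^{2^{gcd(d,l)}} : x ∈ GF(2^d) }. -/

import Mathlib

/-- `T l k x = ∑_{i=0}^{k/l - 1} x^(2^(l*i))`, the linearized trace-like polynomial. -/
noncomputable def T {F : Type*} [Field F] (l k : ℕ) (x : F) : F :=
  ∑ i ∈ Finset.range (k / l), x ^ (2 ^ (l * i))

namespace S14

open Polynomial Finset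
open scoped Classical

abbrev Kb := AlgebraicClosure (ZMod 2)

lemma zmod2_sq : ∀ c : ZMod 2, c ^ 2 = c := by decide

noncomputable def φ : Module.End (ZMod 2) Kb where
  toFun x := x ^ 2
  map_add' x y := add_pow_char x y 2
  map_smul' c x := by
    show (c • x) ^ 2 = c • x ^ 2
    rw [_root_.smul_pow, zmod2_sq]

lemma φ_pow (m : ℕ) (x : Kb) : (φ ^ m) x = x ^ 2 ^ m := by
  induction m with
  | zero => simp
  | succ m ih =>
    rw [pow_succ', Module.End.mul_apply, ih]
    show (x ^ 2 ^ m) ^ 2 = _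
    rw [← pow_mul, ← pow_succ 2 m]

lemma aeval_X_pow_apply (m : ℕ) (x : Kb) : aeval φ ((X : (ZMod 2)[X]) ^ m) x = x ^ 2 ^ m := by
  rw [map_pow, aeval_X, φ_pow]

lemma aeval_mul_apply (f g : (ZMod 2)[X]) (x : Kb) :
    aeval φ (f * g) x = aeval φ f (aeval φ g x) := by
  rw [map_mul, Module.End.mul_apply]

lemma aeval_Xm1 (m : ℕ) (x : Kb) : aeval φ ((X : (ZMod 2)[X]) ^ m - 1) x = x ^ 2 ^ m - x := by
  rw [map_sub, map_one, LinearMap.sub_apply, aeval_X_pow_apply, Module.End.one_apply]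

lemma mem_G_iff (m : ℕ) (x : Kb) : x ^ 2 ^ m = x ↔ aeval φ ((X : (ZMod 2)[X]) ^ m - 1) x = 0 := by
  rw [aeval_Xm1, sub_eq_zero]

lemma dvd_apply_zero {f g : (ZMod 2)[X]} (h : g ∣ f) {x : Kb} (hx : aeval φ g x = 0) :
    aeval φ f x = 0 := by
  obtain ⟨c, rfl⟩ := h
  rw [mul_comm, aeval_mul_apply, hx, map_zero]

lemma pow_closed {x : Kb} {a b : ℕ} (hab : a ∣ b) (hx : x ^ 2 ^ a = x) : x ^ 2 ^ b = x := by
  obtain ⟨c, rfl⟩ := hab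
  induction c with
  | zero => simp
  | succ c ih => rw [Nat.mul_succ, pow_add, pow_mul, ih, hx]

lemma frob_injective (m : ℕ) : Function.Injective fun x : Kb => x ^ 2 ^ m := by
  intro x y h
  have h2 : (x - y) ^ 2 ^ m = 0 := by
    rw [sub_pow_char_pow, show ((x ^ 2 ^ m : Kb) = y ^ 2 ^ m) from h, sub_self]
  have := pow_eq_zero_iff (pow_ne_zero m (two_ne_zero)) |>.mp h2
  exact sub_eq_zero.mp this

lemma sub_trick {x : Kb} {u v : ℕ} (huv : x ^ 2 ^ (u + v) = x) (hv : x ^ 2 ^ v = x) :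
    x ^ 2 ^ u = x := by
  apply frob_injective v
  show (x ^ 2 ^ u) ^ 2 ^ v = x ^ 2 ^ v
  rw [← pow_mul, ← pow_add, huv, hv]

lemma gcd_closed : ∀ a b : ℕ, ∀ x : Kb, x ^ 2 ^ a = x → x ^ 2 ^ b = x →
    x ^ 2 ^ Nat.gcd a b = x := by
  intro a
  induction a using Nat.strong_induction_on with
  | _ a ih =>
    intro b x hxa hxb
    rcases Nat.eq_zero_or_pos a with rfl | ha
    · rwa [Nat.gcd_zero_left]
    · rw [Nat.gcd_rec]
      refine ih (b % a) (Nat.mod_lt b ha) a x ?_ hxa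
      have hv : x ^ 2 ^ (a * (b / a)) = x := pow_closed ⟨_, rfl⟩ hxa
      refine sub_trick (v := a * (b / a)) ?_ hv
      rwa [Nat.mod_add_div]


lemma geoP_mul (a m : ℕ) :
    (∑ i ∈ range m, (X : (ZMod 2)[X]) ^ (a * i)) * (X ^ a - 1) = X ^ (a * m) - 1 := by
  simp only [pow_mul]
  exact geom_sum_mul _ m

lemma dvd_pow_sub_one {a b : ℕ} (h : a ∣ b) : ((X : (ZMod 2)[X]) ^ a - 1) ∣ X ^ b - 1 := by
  obtain ⟨c, rfl⟩ := h
  simpa [pow_mul] using sub_dvd_pow_sub_pow ((X : (ZMod 2)[X]) ^ a) 1 c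

lemma X_pow_mod (d m : ℕ) : ((X : (ZMod 2)[X]) ^ d - 1) ∣ X ^ m - X ^ (m % d) := by
  have h : (X : (ZMod 2)[X]) ^ m - X ^ (m % d) = X ^ (m % d) * (X ^ (d * (m / d)) - 1) := by
    rw [mul_sub, mul_one, ← pow_add, Nat.mod_add_div]
  rw [h]
  exact Dvd.dvd.mul_left (dvd_pow_sub_one ⟨m / d, rfl⟩) _

lemma perm_sum {e l d : ℕ} (he : 0 < e) (hd : 0 < d) (hed : e ∣ d) (hel : e ∣ l)
    (hcop : Nat.Coprime (l / e) (d / e)) :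
    ∑ b ∈ range (d / e), (X : (ZMod 2)[X]) ^ (l * b % d) =
      ∑ b ∈ range (d / e), X ^ (e * b) := by
  set r := d / e with hr
  have hrpos : 0 < r := Nat.div_pos (Nat.le_of_dvd hd hed) he
  haveI : NeZero r := ⟨hrpos.ne'⟩
  have hmod : ∀ b, l * b % d = e * (l / e * b % r) := by
    intro b
    rw [show l * b = e * (l / e * b) by rw [← mul_assoc, Nat.mul_div_cancel' hel],
      show d = e * r from (Nat.mul_div_cancel' hed).symm, Nat.mul_mod_mul_left]
  simp only [hmod]
  -- bridge between sums over `range r` and over `ZMod r`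
  have bridge : ∀ g : ℕ → (ZMod 2)[X], ∑ b ∈ range r, g b = ∑ z : ZMod r, g z.val := by
    intro g
    refine Finset.sum_nbij' (fun b => ((b : ℕ) : ZMod r)) (fun z => z.val) ?_ ?_ ?_ ?_ ?_
    · intro a _; exact Finset.mem_univ _
    · intro z _; exact Finset.mem_range.mpr (ZMod.val_lt z)
    · intro a ha
      show ((a : ℕ) : ZMod r).val = a
      rw [ZMod.val_natCast, Nat.mod_eq_of_lt (Finset.mem_range.mp ha)]
    · intro z _
      show ((z.val : ℕ) : ZMod r) = z
      exact ZMod.natCast_rightInverse z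
    · intro a ha
      show g a = g (((a : ℕ) : ZMod r).val)
      rw [ZMod.val_natCast, Nat.mod_eq_of_lt (Finset.mem_range.mp ha)]
  have hval : ∀ z : ZMod r, l / e * z.val % r = (((l / e : ℕ) : ZMod r) * z).val := by
    intro z
    conv_rhs => rw [← ZMod.natCast_rightInverse z]
    rw [← Nat.cast_mul, ZMod.val_natCast]
  have huniv : ∑ z : ZMod r, (X : (ZMod 2)[X]) ^ (e * (((l / e : ℕ) : ZMod r) * z).val) =
      ∑ z : ZMod r, X ^ (e * z.val) := by
    have := Equiv.sum_comp (Units.mulLeft (ZMod.unitOfCoprime (l / e) hcop))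
      (fun z : ZMod r => (X : (ZMod 2)[X]) ^ (e * z.val))
    simpa [Units.mulLeft, ZMod.coe_unitOfCoprime] using this
  rw [bridge fun b => X ^ (e * (l / e * b % r)), bridge fun b => X ^ (e * b)]
  simp only [hval]
  exact huniv

lemma key_dvd {l e d : ℕ} (he : 0 < e) (hd : 0 < d) (hed : e ∣ d) (hel : e ∣ l)
    (hcop : Nat.Coprime (l / e) (d / e)) (hdl : d ∣ l * (d / e)) (q : ℕ) :
    ((X : (ZMod 2)[X]) ^ d - 1) ∣
      (∑ i ∈ range (q * (d / e)), X ^ (l * i)) -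
        (q : (ZMod 2)[X]) * ∑ b ∈ range (d / e), X ^ (e * b) := by
  induction q with
  | zero => simp
  | succ q ih =>
    rw [Nat.succ_mul, Finset.sum_range_add]
    have h1 : ∀ b, l * (q * (d / e) + b) % d = l * b % d := by
      intro b
      obtain ⟨c, hc⟩ : d ∣ l * (q * (d / e)) := by
        refine Dvd.dvd.trans hdl ?_
        rw [show l * (q * (d / e)) = l * (d / e) * q by ring]
        exact dvd_mul_right _ _
      rw [Nat.mul_add, hc, Nat.mul_add_mod]
    have h2 : ∑ b ∈ range (d / e), (X : (ZMod 2)[X]) ^ (l * (q * (d / e) + b) % d) =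
        ∑ b ∈ range (d / e), X ^ (e * b) := by
      simp only [h1]
      exact perm_sum he hd hed hel hcop
    have tail : ((X : (ZMod 2)[X]) ^ d - 1) ∣
        (∑ b ∈ range (d / e), X ^ (l * (q * (d / e) + b))) -
          ∑ b ∈ range (d / e), X ^ (e * b) := by
      rw [← h2, ← Finset.sum_sub_distrib]
      exact Finset.dvd_sum fun b _ => X_pow_mod d _
    have hcast : ((q + 1 : ℕ) : (ZMod 2)[X]) = (q : (ZMod 2)[X]) + 1 := by push_cast; ring
    rw [hcast]
    have hring : (∑ i ∈ range (q * (d / e)), (X : (ZMod 2)[X]) ^ (l * i)) +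
          (∑ b ∈ range (d / e), X ^ (l * (q * (d / e) + b))) -
          ((q : (ZMod 2)[X]) + 1) * ∑ b ∈ range (d / e), X ^ (e * b) =
        ((∑ i ∈ range (q * (d / e)), X ^ (l * i)) -
          (q : (ZMod 2)[X]) * ∑ b ∈ range (d / e), X ^ (e * b)) +
        ((∑ b ∈ range (d / e), X ^ (l * (q * (d / e) + b))) -
          ∑ b ∈ range (d / e), X ^ (e * b)) := by ring
    rw [hring]
    exact dvd_add ih tail


lemma Gpoly_natDegree (m : ℕ) (hm : 0 < m) :
    ((X : Kb[X]) ^ 2 ^ m - X).natDegree = 2 ^ m := by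
  have h2 : (X : Kb[X]).natDegree < ((X : Kb[X]) ^ 2 ^ m).natDegree := by
    rw [natDegree_X, natDegree_X_pow]
    exact Nat.one_lt_two_pow_iff.mpr hm.ne'
  rw [natDegree_sub_eq_left_of_natDegree_lt h2, natDegree_X_pow]

lemma Gpoly_ne_zero (m : ℕ) (hm : 0 < m) : ((X : Kb[X]) ^ 2 ^ m - X) ≠ 0 := by
  intro h
  have h1 := Gpoly_natDegree m hm
  rw [h, natDegree_zero] at h1
  exact (Nat.two_pow_pos m).ne' h1.symm

lemma Gpoly_sep (m : ℕ) (hm : 0 < m) : ((X : Kb[X]) ^ 2 ^ m - X).Separable := by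
  have hder : derivative ((X : Kb[X]) ^ 2 ^ m - X) = -1 := by
    rw [derivative_sub, derivative_X_pow, derivative_X]
    have hz : ((2 ^ m : ℕ) : Kb) = 0 := by
      push_cast
      rw [show ((2 : Kb) = 0) from CharP.cast_eq_zero Kb 2, zero_pow hm.ne']
    rw [hz, map_zero, zero_mul, zero_sub]
  rw [Polynomial.Separable, hder]
  exact IsCoprime.neg_right isCoprime_one_right

lemma G_eq_roots (m : ℕ) (hm : 0 < m) :
    {x : Kb | x ^ 2 ^ m = x} = ↑(((X : Kb[X]) ^ 2 ^ m - X).roots.toFinset) := by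
  ext x
  simp only [Set.mem_setOf_eq, Finset.coe_sort_coe, Finset.mem_coe, Multiset.mem_toFinset,
    mem_roots (Gpoly_ne_zero m hm), IsRoot.def, eval_sub, eval_pow, eval_X]
  rw [sub_eq_zero]

lemma G_finite (m : ℕ) (hm : 0 < m) : {x : Kb | x ^ 2 ^ m = x}.Finite := by
  rw [G_eq_roots m hm]
  exact (((X : Kb[X]) ^ 2 ^ m - X).roots.toFinset).finite_toSet

lemma card_G (m : ℕ) (hm : 0 < m) : Set.ncard {x : Kb | x ^ 2 ^ m = x} = 2 ^ m := by
  rw [G_eq_roots m hm, Set.ncard_coe_finset,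
    Multiset.toFinset_card_of_nodup (nodup_roots (Gpoly_sep m hm))]
  have hsplit : Splits ((X : Kb[X]) ^ 2 ^ m - X) :=
    IsAlgClosed.splits _
  rw [splits_iff_card_roots.mp hsplit, Gpoly_natDegree m hm]

end S14

open Polynomial Finset S14 in
theorem stmt_14 (n l k : ℕ) (hn : 0 < n) (hl : 0 < l) (hk : 0 < k) (hlk : l ∣ k) :
    (Even (k / Nat.lcm (Nat.gcd n k) l) →
      {x : AlgebraicClosure (ZMod 2) | x ^ (2 ^ n) = x ∧ T l k x = 0} =
        {x : AlgebraicClosure (ZMod 2) | x ^ (2 ^ Nat.gcd n k) = x}) ∧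
    (Odd (k / Nat.lcm (Nat.gcd n k) l) →
      {x : AlgebraicClosure (ZMod 2) | x ^ (2 ^ n) = x ∧ T l k x = 0} =
        (fun x : AlgebraicClosure (ZMod 2) => x + x ^ (2 ^ Nat.gcd (Nat.gcd n k) l)) ''
          {x : AlgebraicClosure (ZMod 2) | x ^ (2 ^ Nat.gcd n k) = x}) := by
  classical
  set d := Nat.gcd n k with hdd
  set e := Nat.gcd d l with hee
  set r := d / e with hrr
  set q := k / Nat.lcm d l with hqq
  have hd : 0 < d := Nat.gcd_pos_of_pos_left k hn
  have he : 0 < e := Nat.gcd_pos_of_pos_left l hd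
  have hed : e ∣ d := Nat.gcd_dvd_left _ _
  have hel : e ∣ l := Nat.gcd_dvd_right _ _
  have hdn : d ∣ n := Nat.gcd_dvd_left _ _
  have hdk : d ∣ k := Nat.gcd_dvd_right _ _
  have hcop : Nat.Coprime (l / e) (d / e) :=
    (Nat.coprime_div_gcd_div_gcd (by rw [← hee] at *; exact he)).symm
  have hler : l * r = Nat.lcm d l := by
    rw [hrr, ← Nat.mul_div_assoc l hed, Nat.lcm, mul_comm l d]
  have hlcm_dvd : Nat.lcm d l ∣ k := Nat.lcm_dvd hdk hlk
  have hql : k / l = q * r := by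
    have hrdvd : r ∣ k / l := (Nat.dvd_div_iff_mul_dvd hlk).mpr (by rw [hler]; exact hlcm_dvd)
    have hq' : q = k / l / r := by rw [hqq, ← hler, ← Nat.div_div_eq_div_mul]
    rw [hq', Nat.div_mul_cancel hrdvd]
  have hdlr : d ∣ l * r := by rw [hler]; exact Nat.dvd_lcm_left d l
  set P : (ZMod 2)[X] := ∑ i ∈ range (k / l), X ^ (l * i) with hP
  set R : (ZMod 2)[X] := ∑ b ∈ range r, X ^ (e * b) with hR
  have hkey := key_dvd he hd hed hel hcop hdlr q
  rw [← hrr, ← hql, ← hP, ← hR] at hkey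
  have hT_eq : ∀ x : Kb, T l k x = aeval φ P x := by
    intro x
    rw [hP, map_sum, LinearMap.sum_apply]
    exact Finset.sum_congr rfl fun i _ => (aeval_X_pow_apply _ x).symm
  have hPX : P * ((X : (ZMod 2)[X]) ^ l - 1) = X ^ k - 1 := by
    rw [hP, geoP_mul, Nat.mul_div_cancel' hlk]
  have hRX : R * ((X : (ZMod 2)[X]) ^ e - 1) = X ^ d - 1 := by
    rw [hR, hrr, geoP_mul, Nat.mul_div_cancel' hed]
  have hBd : ∀ x : Kb, x ^ 2 ^ n = x → T l k x = 0 → x ^ 2 ^ d = x := by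
    intro x hxn hxT
    have hPx : aeval φ P x = 0 := by rw [← hT_eq]; exact hxT
    have hk0 : x ^ 2 ^ k = x := by
      rw [mem_G_iff, ← hPX, mul_comm, aeval_mul_apply, hPx, map_zero]
    exact gcd_closed n k x hxn hk0
  constructor
  · -- even case
    intro hEven
    have hq0 : ((q : (ZMod 2)[X])) = 0 := by
      have h0 : (q : ZMod 2) = 0 :=
        (ZMod.natCast_eq_zero_iff q 2).mpr (even_iff_two_dvd.mp hEven)
      calc (q : (ZMod 2)[X]) = C ((q : ZMod 2)) := (map_natCast (C : ZMod 2 →+* (ZMod 2)[X]) q).symm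
        _ = 0 := by rw [h0, map_zero]
    rw [hq0, zero_mul, sub_zero] at hkey
    ext x
    simp only [Set.mem_setOf_eq]
    constructor
    · rintro ⟨hxn, hxT⟩; exact hBd x hxn hxT
    · intro hxd
      refine ⟨pow_closed hdn hxd, ?_⟩
      rw [hT_eq]
      exact dvd_apply_zero hkey ((mem_G_iff d x).mp hxd)
  · -- odd case
    intro hOdd
    have hq1 : ((q : (ZMod 2)[X])) = 1 := by
      have h2 : (q : ZMod 2) = 1 := by
        rw [← ZMod.natCast_mod q 2, Nat.odd_iff.mp hOdd, Nat.cast_one]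
      calc (q : (ZMod 2)[X]) = C ((q : ZMod 2)) := (map_natCast (C : ZMod 2 →+* (ZMod 2)[X]) q).symm
        _ = 1 := by rw [h2, map_one]
    rw [hq1, one_mul] at hkey
    obtain ⟨Cq, hCq⟩ := hkey
    have hR_eq : ∀ x : Kb, aeval φ R x = ∑ j ∈ range r, x ^ 2 ^ (e * j) := by
      intro x
      rw [hR, map_sum, LinearMap.sum_apply]
      exact Finset.sum_congr rfl fun i _ => aeval_X_pow_apply _ x
    set Vd : Submodule (ZMod 2) Kb := LinearMap.ker (aeval φ ((X : (ZMod 2)[X]) ^ d - 1)) with hVd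
    set θ : Module.End (ZMod 2) Kb := aeval φ ((X : (ZMod 2)[X]) ^ e - 1) with hθ
    have hVd_mem : ∀ x : Kb, x ∈ Vd ↔ x ^ 2 ^ d = x := by
      intro x
      rw [hVd, LinearMap.mem_ker]
      exact (mem_G_iff d x).symm
    have hVd_set : (Vd : Set Kb) = {x : Kb | x ^ 2 ^ d = x} := by
      ext x
      rw [SetLike.mem_coe, hVd_mem, Set.mem_setOf_eq]
    have hθ_apply : ∀ z : Kb, θ z = z + z ^ 2 ^ e := by
      intro z
      rw [hθ, aeval_Xm1, CharTwo.sub_eq_add]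
      ring
    have hA_eq : ((Vd.map θ : Submodule (ZMod 2) Kb) : Set Kb) =
        (fun x : Kb => x + x ^ 2 ^ e) '' {x : Kb | x ^ 2 ^ d = x} := by
      ext y
      simp only [SetLike.mem_coe, Submodule.mem_map, Set.mem_image, Set.mem_setOf_eq]
      constructor
      · rintro ⟨z, hz, rfl⟩
        exact ⟨z, (hVd_mem z).mp hz, (hθ_apply z).symm⟩
      · rintro ⟨z, hz, hy⟩
        exact ⟨z, (hVd_mem z).mpr hz, by rw [hθ_apply]; exact hy⟩
    set f : ↥Vd →ₗ[ZMod 2] Kb := θ.domRestrict Vd with hf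
    have hrange : LinearMap.range f = Vd.map θ := LinearMap.range_domRestrict Vd θ
    have hcardVd : Nat.card ↥Vd = 2 ^ d := by
      have h1 : Nat.card ↥Vd = ((Vd : Set Kb)).ncard := Nat.card_coe_set_eq _
      rw [h1, hVd_set, card_G d hd]
    have hkerf : ∀ y : ↥Vd, (y ∈ LinearMap.ker f ↔ (y : Kb) ^ 2 ^ e = (y : Kb)) := by
      intro y
      rw [LinearMap.mem_ker, hf, LinearMap.domRestrict_apply, hθ]
      exact (mem_G_iff e (y : Kb)).symm
    have hcardker : Nat.card ↥(LinearMap.ker f) = 2 ^ e := by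
      have eqv : ↥(LinearMap.ker f) ≃ ↥{x : Kb | x ^ 2 ^ e = x} :=
        { toFun := fun y => ⟨((y : ↥Vd) : Kb), (hkerf y.1).mp y.2⟩
          invFun := fun x => ⟨⟨(x : Kb), (hVd_mem (x : Kb)).mpr (pow_closed hed x.2)⟩,
            (hkerf _).mpr x.2⟩
          left_inv := fun y => Subtype.ext (Subtype.ext rfl)
          right_inv := fun x => rfl }
      rw [Nat.card_congr eqv, Nat.card_coe_set_eq, card_G e he]
    have hcardA : Nat.card ↥(Vd.map θ) = 2 ^ (d - e) := by
      have hmul := Submodule.card_eq_card_quotient_mul_card (LinearMap.ker f)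
      have hiso : Nat.card ↥(LinearMap.range f) = Nat.card (↥Vd ⧸ LinearMap.ker f) :=
        (Nat.card_congr f.quotKerEquivRange.toEquiv).symm
      rw [hcardVd, hcardker] at hmul
      have hde : e ≤ d := Nat.le_of_dvd hd hed
      have h2 : (2 : ℕ) ^ d = 2 ^ e * 2 ^ (d - e) := by
        rw [← pow_add, Nat.add_sub_cancel' hde]
      rw [← hrange, hiso]
      -- hmul : 2 ^ d = 2 ^ e * Nat.card (↥Vd ⧸ ker f)
      exact Nat.eq_of_mul_eq_mul_left (Nat.two_pow_pos e) (hmul.symm.trans h2)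
    -- the root-set bound for the trace polynomial
    set Q : Kb[X] := ∑ j ∈ range r, X ^ 2 ^ (e * j) with hQ
    have hrpos : 0 < r := by rw [hrr]; exact Nat.div_pos (Nat.le_of_dvd hd hed) he
    obtain ⟨rr, hrr1⟩ : ∃ rr, r = rr + 1 := ⟨r - 1, (Nat.succ_pred_eq_of_pos hrpos).symm⟩
    have herd : e * r = d := by rw [hrr]; exact Nat.mul_div_cancel' hed
    have herr : e * rr = d - e := by rw [hrr1, Nat.mul_succ] at herd; omega
    have hQcoeff : Q.coeff (2 ^ (e * rr)) = 1 := by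
      rw [hQ, finset_sum_coeff]
      rw [Finset.sum_eq_single rr]
      · rw [coeff_X_pow, if_pos rfl]
      · intro j hj hne
        rw [coeff_X_pow, if_neg]
        intro hEq
        exact hne (Nat.eq_of_mul_eq_mul_left he (Nat.pow_right_injective (le_refl 2) hEq.symm))
      · intro hmem
        exact absurd (Finset.mem_range.mpr (by omega)) hmem
    have hQne : Q ≠ 0 := by
      intro h0
      rw [h0, coeff_zero] at hQcoeff
      exact one_ne_zero hQcoeff.symm
    have hQdeg : Q.natDegree ≤ 2 ^ (d - e) := by
      rw [hQ]
      refine natDegree_sum_le_of_forall_le _ _ ?_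
      intro j hj
      rw [natDegree_X_pow]
      have hj' : j ≤ rr := by have := Finset.mem_range.mp hj; omega
      calc 2 ^ (e * j) ≤ 2 ^ (e * rr) :=
            Nat.pow_le_pow_right (by norm_num) (Nat.mul_le_mul_left e hj')
        _ = 2 ^ (d - e) := by rw [herr]
    set Cs : Set Kb := {x : Kb | x ^ 2 ^ d = x ∧ aeval φ R x = 0} with hCs
    have hCsub : Cs ⊆ ↑(Q.roots.toFinset) := by
      intro x hx
      simp only [Finset.coe_sort_coe, Finset.mem_coe, Multiset.mem_toFinset,
        mem_roots hQne, IsRoot.def]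
      have hev : Q.eval x = ∑ j ∈ range r, x ^ 2 ^ (e * j) := by
        rw [hQ, eval_finset_sum]
        simp [eval_pow]
      rw [hev, ← hR_eq x]
      exact hx.2
    have hCfin : Cs.Finite := Set.Finite.subset (Q.roots.toFinset.finite_toSet) hCsub
    have hCcard : Cs.ncard ≤ 2 ^ (d - e) := by
      calc Cs.ncard ≤ (↑Q.roots.toFinset : Set Kb).ncard :=
            Set.ncard_le_ncard hCsub (Finset.finite_toSet _)
        _ = Q.roots.toFinset.card := Set.ncard_coe_finset _
        _ ≤ Multiset.card Q.roots := Multiset.toFinset_card_le _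
        _ ≤ Q.natDegree := card_roots' Q
        _ ≤ 2 ^ (d - e) := hQdeg
    have hA_sub_C : ((Vd.map θ) : Set Kb) ⊆ Cs := by
      rintro y hy
      rw [SetLike.mem_coe, Submodule.mem_map] at hy
      obtain ⟨z, hz, rfl⟩ := hy
      rw [hVd_mem, mem_G_iff] at hz
      rw [hCs]
      refine ⟨?_, ?_⟩
      · rw [mem_G_iff d, hθ, ← aeval_mul_apply, mul_comm, aeval_mul_apply, hz, map_zero]
      · rw [hθ, ← aeval_mul_apply, hRX]
        exact hz
    have hB_sub_C : {x : Kb | x ^ 2 ^ n = x ∧ T l k x = 0} ⊆ Cs := by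
      rintro x ⟨hxn, hxT⟩
      have hxd : x ^ 2 ^ d = x := hBd x hxn hxT
      have hPx : aeval φ P x = 0 := by rw [← hT_eq]; exact hxT
      have hPR : aeval φ (P - R) x = 0 := by
        rw [hCq, mul_comm, aeval_mul_apply, (mem_G_iff d x).mp hxd, map_zero]
      have hRx : aeval φ R x = 0 := by
        have h3 : aeval φ P x - aeval φ R x = 0 := by
          rw [← LinearMap.sub_apply, ← map_sub]
          exact hPR
        rw [hPx, zero_sub, neg_eq_zero] at h3
        exact h3
      exact ⟨hxd, hRx⟩
    have hAC : ((Vd.map θ) : Set Kb) = Cs := by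
      refine Set.eq_of_subset_of_ncard_le hA_sub_C ?_ hCfin
      have hAn : ((Vd.map θ) : Set Kb).ncard = 2 ^ (d - e) := by
        rw [← Nat.card_coe_set_eq]
        exact hcardA
      rw [hAn]
      exact hCcard
    have hA_sub_B : ((Vd.map θ) : Set Kb) ⊆ {x : Kb | x ^ 2 ^ n = x ∧ T l k x = 0} := by
      rintro y hy
      rw [SetLike.mem_coe, Submodule.mem_map] at hy
      obtain ⟨z, hz, rfl⟩ := hy
      rw [hVd_mem, mem_G_iff] at hz
      have hyd : θ z ^ 2 ^ d = θ z := by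
        rw [mem_G_iff d, hθ, ← aeval_mul_apply, mul_comm, aeval_mul_apply, hz, map_zero]
      refine ⟨pow_closed hdn hyd, ?_⟩
      rw [hT_eq, hθ, ← aeval_mul_apply]
      have hfact : P * ((X : (ZMod 2)[X]) ^ e - 1) =
          (1 + Cq * (X ^ e - 1)) * (X ^ d - 1) := by
        linear_combination ((X : (ZMod 2)[X]) ^ e - 1) * hCq + hRX
      rw [hfact, aeval_mul_apply, hz, map_zero]
    rw [← hA_eq]
    apply Set.Subset.antisymm
    · intro x hx
      rw [hAC]
      exact hB_sub_C hx
    · exact hA_sub_B
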